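/- Let G be a graph without a 2-factor and let (S,T) be a minimum barrier. Then for every component C of G−(S∪T) with e_G(C,T) odd and every vertex v ∈ T, v has at most one neighbor in C, i.e., e_G(v, V(C)) ≤ 1. -/

import Mathlib

open SimpleGraph

namespace VizingTwoFactor

variable {V : Type*}

/-- The degree of a vertex, as the `ncard` of its neighbor set. -/
noncomputable def ndeg (G : SimpleGraph V) (v : V) : ℕ :=
  (G.neighborSet v).ncard

/-- `G` is bipartite with parts `X` and `T`. -/
def IsBipartiteWith (G : SimpleGraph V) (X T : Set V) : Prop :=
  Disjoint X T ∧ ∀ u v : V, G.Adj u v → (u ∈ X ∧ v ∈ T) ∨ (u ∈ T ∧ v ∈ X)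

/-- The set of neighbors of a set of vertices. -/
def NSet (G : SimpleGraph V) (A : Set V) : Set V :=
  {v | ∃ a ∈ A, G.Adj a v}

/-- `G` has a matching saturating the vertex set `T`. -/
def HasMatchingSaturating (G : SimpleGraph V) (T : Set V) : Prop :=
  ∃ M : G.Subgraph, M.IsMatching ∧ T ⊆ M.verts

/-- Number of (ordered) adjacent pairs with first coordinate in `A` and second in `B`;
for disjoint `A`, `B` this is the number of edges between `A` and `B`. -/
noncomputable def eBetween (G : SimpleGraph V) (A B : Set V) : ℕ :=
  {p : V × V | p.1 ∈ A ∧ p.2 ∈ B ∧ G.Adj p.1 p.2}.ncard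

/-- Number of neighbors of `v` inside `A`. -/
noncomputable def degIn (G : SimpleGraph V) (A : Set V) (v : V) : ℕ :=
  (G.neighborSet v ∩ A).ncard

/-- The vertex set (in `V`) of a connected component of an induced subgraph. -/
def csupp (G : SimpleGraph V) (U : Set V) (C : (G.induce U).ConnectedComponent) : Set V :=
  Subtype.val '' C.supp

/-- The odd components of `G − (S ∪ T)` w.r.t. `(S,T)`: components sending an odd
number of edges to `T`. -/
noncomputable def oddComps (G : SimpleGraph V) (S T : Set V) :
    Set ((G.induce (S ∪ T)ᶜ).ConnectedComponent) :=
  {C | Odd (eBetween G (csupp G (S ∪ T)ᶜ C) T)}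

/-- `h_G(S,T)`: the number of odd components. -/
noncomputable def hNum (G : SimpleGraph V) (S T : Set V) : ℕ :=
  (oddComps G S T).ncard

/-- `δ_G(S,T) = 2|S| + Σ_{v∈T} deg_{G−S}(v) − 2|T| − h_G(S,T)`. -/
noncomputable def deltaST (G : SimpleGraph V) (S T : Set V) : ℤ :=
  2 * S.ncard + (∑ᶠ v ∈ T, (degIn G Sᶜ v : ℤ)) - 2 * T.ncard - hNum G S T

/-- A barrier. -/
def IsBarrier (G : SimpleGraph V) (S T : Set V) : Prop :=
  Disjoint S T ∧ deltaST G S T ≤ -2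

/-- A minimum barrier: minimizes `|S ∪ T|` among barriers. -/
def IsMinBarrier (G : SimpleGraph V) (S T : Set V) : Prop :=
  IsBarrier G S T ∧ ∀ S' T' : Set V, IsBarrier G S' T' → (S ∪ T).ncard ≤ (S' ∪ T').ncard

/-- `G` has a 2-factor: a spanning subgraph in which every vertex has degree 2. -/
def HasTwoFactor (G : SimpleGraph V) : Prop :=
  ∃ H : SimpleGraph V, H ≤ G ∧ ∀ v : V, ndeg H v = 2

/-- `G` has a proper edge coloring with `k` colors. -/
def HasEdgeColoring (G : SimpleGraph V) (k : ℕ) : Prop :=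
  ∃ f : G.edgeSet → Fin k, ∀ e₁ e₂ : G.edgeSet, e₁ ≠ e₂ →
    (∃ v : V, v ∈ (e₁ : Sym2 V) ∧ v ∈ (e₂ : Sym2 V)) → f e₁ ≠ f e₂

/-- The chromatic index `χ'(G)`. -/
noncomputable def chromIdx (G : SimpleGraph V) : ℕ :=
  sInf {k | HasEdgeColoring G k}

/-- `Δ` is the maximum degree of `G`. -/
def IsMaxDegree (G : SimpleGraph V) (Δ : ℕ) : Prop :=
  (∀ v : V, ndeg G v ≤ Δ) ∧ ∃ v : V, ndeg G v = Δ

/-- `G` is `Δ`-critical: no isolated vertices, maximum degree `Δ`, `χ'(G) = Δ + 1`, and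
`χ'(G − e) = Δ` for every edge `e`. -/
def IsDeltaCritical (G : SimpleGraph V) (Δ : ℕ) : Prop :=
  (∀ v : V, ∃ u : V, G.Adj v u) ∧ IsMaxDegree G Δ ∧ chromIdx G = Δ + 1 ∧
    ∀ e ∈ G.edgeSet, chromIdx (G.deleteEdges {e}) = Δ

/-- `T` is an independent set in `G`. -/
def IsIndep (G : SimpleGraph V) (T : Set V) : Prop :=
  ∀ u ∈ T, ∀ v ∈ T, ¬ G.Adj u v

/-- The bipartite graph `H*` consisting of the edges of `G` between `V(G) \ T` and `T`. -/
def betweenGraph (G : SimpleGraph V) (T : Set V) : SimpleGraph V where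
  Adj u v := G.Adj u v ∧ ((u ∉ T ∧ v ∈ T) ∨ (u ∈ T ∧ v ∉ T))
  symm := ⟨fun u v h => ⟨h.1.symm, h.2.elim (fun h' => Or.inr ⟨h'.2, h'.1⟩)
    (fun h' => Or.inl ⟨h'.2, h'.1⟩)⟩⟩
  loopless := ⟨fun u h => G.loopless.irrefl u h.1⟩

section Aux
variable [Fintype V] (G : SimpleGraph V)

lemma eBetween_union_right (A B B' : Set V) (h : Disjoint B B') :
    eBetween G A (B ∪ B') = eBetween G A B + eBetween G A B' := by
  classical
  have hset : {p : V × V | p.1 ∈ A ∧ p.2 ∈ B ∪ B' ∧ G.Adj p.1 p.2}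
      = {p : V × V | p.1 ∈ A ∧ p.2 ∈ B ∧ G.Adj p.1 p.2}
        ∪ {p : V × V | p.1 ∈ A ∧ p.2 ∈ B' ∧ G.Adj p.1 p.2} := by
    ext p; simp only [Set.mem_setOf_eq, Set.mem_union]; tauto
  rw [eBetween, hset, Set.ncard_union_eq _ (Set.toFinite _) (Set.toFinite _)]
  · rfl
  · rw [Set.disjoint_left]
    rintro p ⟨-, hp, -⟩ ⟨-, hp', -⟩
    exact (Set.disjoint_left.1 h) hp hp'

lemma eBetween_union_left (A A' B : Set V) (h : Disjoint A A') :
    eBetween G (A ∪ A') B = eBetween G A B + eBetween G A' B := by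
  classical
  have hset : {p : V × V | p.1 ∈ A ∪ A' ∧ p.2 ∈ B ∧ G.Adj p.1 p.2}
      = {p : V × V | p.1 ∈ A ∧ p.2 ∈ B ∧ G.Adj p.1 p.2}
        ∪ {p : V × V | p.1 ∈ A' ∧ p.2 ∈ B ∧ G.Adj p.1 p.2} := by
    ext p; simp only [Set.mem_setOf_eq, Set.mem_union]; tauto
  rw [eBetween, hset, Set.ncard_union_eq _ (Set.toFinite _) (Set.toFinite _)]
  · rfl
  · rw [Set.disjoint_left]
    rintro p ⟨hp, -, -⟩ ⟨hp', -, -⟩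
    exact (Set.disjoint_left.1 h) hp hp'

lemma eBetween_singleton_right (A : Set V) (v : V) :
    eBetween G A {v} = degIn G A v := by
  rw [eBetween, degIn]
  have : {p : V × V | p.1 ∈ A ∧ p.2 ∈ ({v} : Set V) ∧ G.Adj p.1 p.2}
      = (fun x => (x, v)) '' (G.neighborSet v ∩ A) := by
    ext ⟨a, b⟩
    simp only [Set.mem_setOf_eq, Set.mem_image, Set.mem_inter_iff, mem_neighborSet,
      Set.mem_singleton_iff, Prod.mk.injEq]
    constructor
    · rintro ⟨ha, rfl, hadj⟩; exact ⟨a, ⟨hadj.symm, ha⟩, rfl, rfl⟩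
    · rintro ⟨x, ⟨hadj, hx⟩, rfl, rfl⟩; exact ⟨hx, rfl, hadj.symm⟩
  rw [this, Set.ncard_image_of_injective _ (fun x y h => congrArg Prod.fst h)]

lemma eBetween_singleton_left (B : Set V) (v : V) :
    eBetween G {v} B = degIn G B v := by
  rw [eBetween, degIn]
  have : {p : V × V | p.1 ∈ ({v} : Set V) ∧ p.2 ∈ B ∧ G.Adj p.1 p.2}
      = (fun x => (v, x)) '' (G.neighborSet v ∩ B) := by
    ext ⟨a, b⟩
    simp only [Set.mem_setOf_eq, Set.mem_image, Set.mem_inter_iff, mem_neighborSet,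
      Set.mem_singleton_iff, Prod.mk.injEq]
    constructor
    · rintro ⟨rfl, hb, hadj⟩; exact ⟨b, ⟨hadj, hb⟩, rfl, rfl⟩
    · rintro ⟨x, ⟨hadj, hx⟩, rfl, rfl⟩; exact ⟨rfl, hx, hadj⟩
  rw [this, Set.ncard_image_of_injective _ (fun x y h => congrArg Prod.snd h)]

lemma degIn_union (A A' : Set V) (v : V) (h : Disjoint A A') :
    degIn G (A ∪ A') v = degIn G A v + degIn G A' v := by
  rw [degIn, degIn, degIn, Set.inter_union_distrib_left,
    Set.ncard_union_eq (h.mono Set.inter_subset_right Set.inter_subset_right)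
      (Set.toFinite _) (Set.toFinite _)]

lemma degIn_biUnion {ι : Type*} (s : Finset ι) (g : ι → Set V) (v : V)
    (h : ∀ i ∈ s, ∀ j ∈ s, i ≠ j → Disjoint (g i) (g j)) :
    degIn G (⋃ i ∈ s, g i) v = ∑ i ∈ s, degIn G (g i) v := by
  classical
  induction s using Finset.induction with
  | empty => simp [degIn]
  | @insert a s' hi ih =>
    rw [Finset.sum_insert hi]
    have : (⋃ i ∈ insert a s', g i) = g a ∪ ⋃ i ∈ s', g i := by simp
    rw [this, degIn_union]
    · rw [ih (fun i hi' j hj' hij => h i (Finset.mem_insert_of_mem hi') j (Finset.mem_insert_of_mem hj') hij)]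
    · rw [Set.disjoint_right]
      rintro x hx hxa
      simp only [Set.mem_iUnion] at hx
      obtain ⟨i, hi', hxi⟩ := hx
      exact (Set.disjoint_left.1 (h a (Finset.mem_insert_self a s') i
        (Finset.mem_insert_of_mem hi') (by rintro rfl; exact hi hi'))) hxa hxi

lemma eBetween_biUnion {ι : Type*} (s : Finset ι) (g : ι → Set V) (B : Set V)
    (h : ∀ i ∈ s, ∀ j ∈ s, i ≠ j → Disjoint (g i) (g j)) :
    eBetween G (⋃ i ∈ s, g i) B = ∑ i ∈ s, eBetween G (g i) B := by
  classical
  induction s using Finset.induction with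
  | empty => simp [eBetween]
  | @insert a s' hi ih =>
    rw [Finset.sum_insert hi]
    have : (⋃ i ∈ insert a s', g i) = g a ∪ ⋃ i ∈ s', g i := by simp
    rw [this, eBetween_union_left]
    · rw [ih (fun i hi' j hj' hij => h i (Finset.mem_insert_of_mem hi') j (Finset.mem_insert_of_mem hj') hij)]
    · rw [Set.disjoint_right]
      rintro x hx hxa
      simp only [Set.mem_iUnion] at hx
      obtain ⟨i, hi', hxi⟩ := hx
      exact (Set.disjoint_left.1 (h a (Finset.mem_insert_self a s') i
        (Finset.mem_insert_of_mem hi') (by rintro rfl; exact hi hi'))) hxa hxi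


omit [Fintype V] in
lemma mem_csupp {U : Set V} {C : (G.induce U).ConnectedComponent} {x : V} :
    x ∈ csupp G U C ↔ ∃ h : x ∈ U, (G.induce U).connectedComponentMk ⟨x, h⟩ = C := by
  constructor
  · rintro ⟨⟨y, hy⟩, hmem, rfl⟩; exact ⟨hy, hmem⟩
  · rintro ⟨h, hc⟩; exact ⟨⟨x, h⟩, hc, rfl⟩

omit [Fintype V] in
lemma csupp_subset {U : Set V} (C : (G.induce U).ConnectedComponent) : csupp G U C ⊆ U := by
  rintro x ⟨⟨y, hy⟩, -, rfl⟩; exact hy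

omit [Fintype V] in
lemma mem_csupp_self {U : Set V} (x : U) : (x : V) ∈ csupp G U ((G.induce U).connectedComponentMk x) :=
  ⟨x, rfl, rfl⟩

omit [Fintype V] in
lemma csupp_nonempty {U : Set V} (C : (G.induce U).ConnectedComponent) : (csupp G U C).Nonempty := by
  obtain ⟨x, rfl⟩ := C.exists_rep
  exact ⟨x, mem_csupp_self G x⟩

omit [Fintype V] in
lemma csupp_disjoint {U : Set V} {C C' : (G.induce U).ConnectedComponent} (h : C ≠ C') :
    Disjoint (csupp G U C) (csupp G U C') := by
  rw [Set.disjoint_left]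
  rintro x hx hx'
  rw [mem_csupp] at hx hx'
  obtain ⟨h1, hc⟩ := hx; obtain ⟨h2, hc'⟩ := hx'
  exact h (hc ▸ hc' ▸ rfl)

omit [Fintype V] in
lemma iUnion_csupp (U : Set V) : (⋃ C : (G.induce U).ConnectedComponent, csupp G U C) = U := by
  apply subset_antisymm
  · exact Set.iUnion_subset (fun C => csupp_subset G C)
  · intro x hx
    exact Set.mem_iUnion.2 ⟨_, mem_csupp_self G ⟨x, hx⟩⟩

section Components
variable {U W : Set V} {v : V}
  (hsub : U ⊆ W) (hvW : v ∈ W) (hvU : v ∉ U) (hcov : ∀ x ∈ W, x ≠ v → x ∈ U)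

/-- inclusion hom -/
def incHom : G.induce U →g G.induce W where
  toFun := fun x => ⟨x.1, hsub x.2⟩
  map_rel' := fun {a b} h => h

/-- induced map on components -/
noncomputable def cmap (C : (G.induce U).ConnectedComponent) : (G.induce W).ConnectedComponent :=
  C.map (incHom G hsub)

omit [Fintype V] in
lemma cmap_mk (x : U) :
    cmap G hsub ((G.induce U).connectedComponentMk x) =
      (G.induce W).connectedComponentMk ⟨x.1, hsub x.2⟩ := rfl

omit [Fintype V] in
lemma csupp_subset_cmap (C : (G.induce U).ConnectedComponent) :
    csupp G U C ⊆ csupp G W (cmap G hsub C) := by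
  intro x hx
  rw [mem_csupp] at hx
  obtain ⟨hxU, rfl⟩ := hx
  rw [cmap_mk]
  exact mem_csupp_self G ⟨x, hsub hxU⟩

/-- the component of `v` in `W` -/
noncomputable def vComp : (G.induce W).ConnectedComponent :=
  (G.induce W).connectedComponentMk ⟨v, hvW⟩

/-- components of `U` adjacent to `v` -/
def adjComps (v : V) : Set ((G.induce U).ConnectedComponent) :=
  {C | ∃ x ∈ csupp G U C, G.Adj v x}

omit [Fintype V] in
lemma cmap_eq_vComp_of_mem {C : (G.induce U).ConnectedComponent} (hC : C ∈ adjComps G v) :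
    cmap G hsub C = vComp G hvW := by
  obtain ⟨x, hx, hadj⟩ := hC
  rw [mem_csupp] at hx
  obtain ⟨hxU, rfl⟩ := hx
  rw [cmap_mk]
  apply ConnectedComponent.connectedComponentMk_eq_of_adj
  exact hadj.symm

omit [Fintype V] in
include hcov in
lemma walk_stay {x y : W} (p : (G.induce W).Walk x y) :
    ∀ (hx : x.1 ∈ U), (∀ z : U, (G.induce U).Reachable ⟨x.1, hx⟩ z → ¬ G.Adj v z.1) →
      ∃ hy : y.1 ∈ U, (G.induce U).Reachable ⟨x.1, hx⟩ ⟨y.1, hy⟩ := by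
  induction p with
  | nil => exact fun hx _ => ⟨hx, Reachable.refl _⟩
  | @cons x z y h p ih =>
    intro hx hA
    have hzv : z.1 ≠ v := by
      intro hzeq
      exact hA ⟨x.1, hx⟩ (Reachable.refl _) (by rw [← hzeq]; exact (h : G.Adj x.1 z.1).symm)
    have hzU : z.1 ∈ U := hcov z.1 z.2 hzv
    have hadjU : (G.induce U).Adj ⟨x.1, hx⟩ ⟨z.1, hzU⟩ := h
    obtain ⟨hy, hr⟩ := ih hzU (fun w hw => hA w (hadjU.reachable.trans hw))
    exact ⟨hy, hadjU.reachable.trans hr⟩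

omit [Fintype V] in
include hcov in
lemma csupp_cmap_of_not_mem {C : (G.induce U).ConnectedComponent} (hC : C ∉ adjComps G v) :
    csupp G W (cmap G hsub C) = csupp G U C := by
  apply subset_antisymm
  · intro y hy
    obtain ⟨x, hx⟩ := csupp_nonempty G C
    rw [mem_csupp] at hx hy
    obtain ⟨hxU, rfl⟩ := hx
    obtain ⟨hyW, hyc⟩ := hy
    rw [cmap_mk] at hyc
    have hreach : (G.induce W).Reachable ⟨x, hsub hxU⟩ ⟨y, hyW⟩ :=
      (ConnectedComponent.eq.mp hyc).symm
    have hnA : ∀ z : U, (G.induce U).Reachable ⟨x, hxU⟩ z → ¬ G.Adj v z.1 := by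
      intro z hz hadj
      exact hC ⟨z.1, (mem_csupp G).2 ⟨z.2, ((ConnectedComponent.eq.mpr hz).symm : _)⟩, hadj⟩
    obtain ⟨hyU, hr⟩ := walk_stay G hcov hreach.some hxU hnA
    exact (mem_csupp G).2 ⟨hyU, (ConnectedComponent.eq.mpr hr).symm⟩
  · exact csupp_subset_cmap G hsub C

omit [Fintype V] in
lemma not_mem_csupp_self (C : (G.induce U).ConnectedComponent) (hvU : v ∉ U) : v ∉ csupp G U C :=
  fun h => hvU (csupp_subset G C h)

omit [Fintype V] in
include hvU hcov in
lemma cmap_ne_vComp {C : (G.induce U).ConnectedComponent} (hC : C ∉ adjComps G v) :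
    cmap G hsub C ≠ vComp G hvW := by
  intro heq
  have hv : v ∈ csupp G W (cmap G hsub C) := by
    rw [heq]; exact mem_csupp_self G ⟨v, hvW⟩
  rw [csupp_cmap_of_not_mem G hsub hcov hC] at hv
  exact not_mem_csupp_self G C hvU hv

omit [Fintype V] in
include hvU hcov in
lemma cmap_injOn : Set.InjOn (cmap G hsub) (adjComps G v)ᶜ := by
  intro C hC C' hC' heq
  obtain ⟨x, hx⟩ := csupp_nonempty G C
  have hx' : x ∈ csupp G U C' := by
    rw [← csupp_cmap_of_not_mem G hsub hcov hC', ← heq, csupp_cmap_of_not_mem G hsub hcov hC]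
    exact hx
  rw [mem_csupp] at hx hx'
  obtain ⟨h1, e1⟩ := hx; obtain ⟨h2, e2⟩ := hx'
  rw [← e1, ← e2]

omit [Fintype V] in
include hvU hcov in
lemma cmap_surj {D : (G.induce W).ConnectedComponent} (hD : D ≠ vComp G hvW) :
    ∃ C, C ∉ adjComps G v ∧ cmap G hsub C = D := by
  obtain ⟨⟨x, hxW⟩, rfl⟩ := D.exists_rep
  have hxv : x ≠ v := by
    rintro rfl
    exact hD rfl
  have hxU : x ∈ U := hcov x hxW hxv
  refine ⟨(G.induce U).connectedComponentMk ⟨x, hxU⟩, ?_, cmap_mk G hsub _⟩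
  intro hmem
  have h2 := cmap_eq_vComp_of_mem G hsub hvW hmem
  rw [cmap_mk G hsub] at h2
  exact hD h2

omit [Fintype V] in
include hsub hvU hcov in
lemma csupp_vComp :
    csupp G W (vComp G hvW) = insert v (⋃ C ∈ adjComps G v, csupp G U C) := by
  apply subset_antisymm
  · intro x hx
    by_cases hxv : x = v
    · exact hxv ▸ Set.mem_insert _ _
    · have hxW : x ∈ W := csupp_subset G _ hx
      have hxU : x ∈ U := hcov x hxW hxv
      set C := (G.induce U).connectedComponentMk ⟨x, hxU⟩ with hCdef
      have hxC : x ∈ csupp G U C := mem_csupp_self G ⟨x, hxU⟩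
      have hCA : C ∈ adjComps G v := by
        by_contra hCA
        have hne := cmap_ne_vComp G hsub hvW hvU hcov hCA
        have : x ∈ csupp G W (cmap G hsub C) := csupp_subset_cmap G hsub C hxC
        exact (Set.disjoint_left.1 (csupp_disjoint G hne)) this hx
      exact Set.mem_insert_of_mem _ (Set.mem_biUnion hCA hxC)
  · intro x hx
    rcases Set.mem_insert_iff.1 hx with rfl | hx
    · exact mem_csupp_self G ⟨x, hvW⟩
    · obtain ⟨C, hC, hxC⟩ := Set.mem_iUnion₂.1 hx
      have := csupp_subset_cmap G hsub C hxC
      rwa [cmap_eq_vComp_of_mem G hsub hvW hC] at this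

end Components

lemma card_le_sum' {ι : Type*} (s : Finset ι) (f : ι → ℕ) (h : ∀ x ∈ s, 1 ≤ f x) :
    s.card ≤ ∑ x ∈ s, f x := by
  calc s.card = ∑ _x ∈ s, 1 := by simp
  _ ≤ ∑ x ∈ s, f x := Finset.sum_le_sum h

lemma all_one_of_sum_le {ι : Type*} [DecidableEq ι] (s : Finset ι) (f : ι → ℕ)
    (h1 : ∀ x ∈ s, 1 ≤ f x) (h2 : ∑ x ∈ s, f x ≤ s.card) : ∀ x ∈ s, f x = 1 := by
  intro x hx
  have e1 : ∑ y ∈ s.erase x, f y + f x = ∑ y ∈ s, f y := Finset.sum_erase_add s f hx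
  have e2 : (s.erase x).card ≤ ∑ y ∈ s.erase x, f y :=
    card_le_sum' _ _ (fun y hy => h1 y (Finset.mem_of_mem_erase hy))
  have e3 : (s.erase x).card + 1 = s.card := Finset.card_erase_add_one hx
  have := h1 x hx
  omega



end Aux

theorem vizing_stmt_9 [Fintype V] (G : SimpleGraph V) (S T : Set V)
    (hG : ¬ HasTwoFactor G) (hmin : IsMinBarrier G S T) :
    ∀ C : (G.induce (S ∪ T)ᶜ).ConnectedComponent,
      Odd (eBetween G (csupp G (S ∪ T)ᶜ C) T) →
      ∀ v ∈ T, degIn G (csupp G (S ∪ T)ᶜ C) v ≤ 1 := by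
  classical
  intro C₀ hC₀odd v hvT
  by_contra hle
  push_neg at hle
  revert hle
  revert hC₀odd
  revert C₀
  set U : Set V := (S ∪ T)ᶜ with hU
  set T' : Set V := T \ {v} with hT'
  set W : Set V := (S ∪ T')ᶜ with hWdef
  intro C₀ hC₀odd hle
  have hvS : v ∉ S := fun h => (Set.disjoint_left.1 hmin.1.1) h hvT
  have hvT' : v ∉ T' := by simp [hT']
  have hsub : U ⊆ W := Set.compl_subset_compl.2 (Set.union_subset_union_right S Set.diff_subset)
  have hvW : v ∈ W := by
    simp only [hWdef, Set.mem_compl_iff, Set.mem_union]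
    rintro (h | h)
    · exact hvS h
    · exact hvT' h
  have hvU : v ∉ U := by simp [hU, hvT]
  have hcov : ∀ x ∈ W, x ≠ v → x ∈ U := by
    intro x hx hxv
    simp only [hWdef, hT', Set.mem_compl_iff, Set.mem_union, Set.mem_diff,
      Set.mem_singleton_iff] at hx
    simp only [hU, Set.mem_compl_iff, Set.mem_union]
    tauto
  -- T decomposition
  have hTdecomp : T = T' ∪ {v} := by
    rw [hT']
    ext x
    simp only [Set.mem_union, Set.mem_diff, Set.mem_singleton_iff]
    constructor
    · intro hx
      by_cases hxv : x = v
      · exact Or.inr hxv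
      · exact Or.inl ⟨hx, hxv⟩
    · rintro (⟨hx, -⟩ | rfl)
      · exact hx
      · exact hvT
  have hdisjT' : Disjoint T' ({v} : Set V) := by
    rw [Set.disjoint_right]
    rintro x rfl
    exact hvT'
  have eSplit : ∀ A : Set V, eBetween G A T = eBetween G A T' + degIn G A v := by
    intro A
    rw [hTdecomp, eBetween_union_right G A T' {v} hdisjT', eBetween_singleton_right]
  -- adjacent components
  have h𝒜fin : (adjComps G v : Set ((G.induce U).ConnectedComponent)).Finite := Set.toFinite _
  set 𝒜s : Set ((G.induce U).ConnectedComponent) := adjComps G v with h𝒜s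
  set 𝒜 : Finset ((G.induce U).ConnectedComponent) := h𝒜fin.toFinset with h𝒜
  have hmem𝒜 : ∀ C, C ∈ 𝒜 ↔ C ∈ 𝒜s := fun C => Set.Finite.mem_toFinset _
  have hdC0 : ∀ C, C ∉ 𝒜s → degIn G (csupp G U C) v = 0 := by
    intro C hC
    rw [degIn, Set.ncard_eq_zero (Set.toFinite _)]
    ext x
    simp only [Set.mem_inter_iff, mem_neighborSet, Set.mem_empty_iff_false, iff_false]
    rintro ⟨hadj, hx⟩
    exact hC ⟨x, hx, hadj⟩
  have hdC1 : ∀ C ∈ 𝒜, 1 ≤ degIn G (csupp G U C) v := by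
    intro C hC
    rw [hmem𝒜] at hC
    obtain ⟨x, hx, hadj⟩ := hC
    have : x ∈ G.neighborSet v ∩ csupp G U C := ⟨hadj, hx⟩
    have hne : (G.neighborSet v ∩ csupp G U C).Nonempty := ⟨x, this⟩
    rw [degIn]
    exact (Set.ncard_pos (Set.toFinite _)).2 hne
  have hC₀A : C₀ ∈ 𝒜 := by
    rw [hmem𝒜]
    by_contra hC
    have := hdC0 C₀ hC
    omega
  -- universe of components
  have h𝒰fin : (Set.univ : Set ((G.induce U).ConnectedComponent)).Finite := Set.toFinite _
  set 𝒰 : Finset ((G.induce U).ConnectedComponent) := h𝒰fin.toFinset with h𝒰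
  have hmem𝒰 : ∀ C, C ∈ 𝒰 := fun C => (Set.Finite.mem_toFinset _).2 (Set.mem_univ C)
  have h𝒜𝒰 : 𝒜 ⊆ 𝒰 := fun C _ => hmem𝒰 C
  have hdisjC : ∀ C ∈ 𝒰, ∀ C' ∈ 𝒰, C ≠ C' → Disjoint (csupp G U C) (csupp G U C') :=
    fun C _ C' _ h => csupp_disjoint G h
  -- degIn G U v as a sum
  have hUU : (⋃ C ∈ 𝒰, csupp G U C) = U := by
    apply subset_antisymm
    · exact Set.iUnion₂_subset (fun C _ => csupp_subset G C)
    · intro x hx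
      exact Set.mem_biUnion (hmem𝒰 _) (mem_csupp_self G ⟨x, hx⟩)
  have hdegU : degIn G U v = ∑ C ∈ 𝒜, degIn G (csupp G U C) v := by
    have h1 := degIn_biUnion G 𝒰 (fun C => csupp G U C) v hdisjC
    rw [hUU] at h1
    rw [h1]
    symm
    apply Finset.sum_subset h𝒜𝒰
    intro C _ hC
    exact hdC0 C (fun h => hC ((hmem𝒜 C).2 h))
  -- degIn G Sᶜ v decomposition
  have hScomp : Sᶜ = (T' ∪ U) ∪ {v} := by
    ext x
    simp only [Set.mem_compl_iff, Set.mem_union, Set.mem_singleton_iff, hU, hT',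
      Set.mem_diff]
    constructor
    · intro hx
      by_cases hxv : x = v
      · exact Or.inr hxv
      · by_cases hxT : x ∈ T
        · exact Or.inl (Or.inl ⟨hxT, hxv⟩)
        · exact Or.inl (Or.inr (fun h => h.elim hx hxT))
    · rintro (((⟨hxT, -⟩) | hx) | rfl)
      · exact fun h => (Set.disjoint_left.1 hmin.1.1) h hxT
      · exact fun h => hx (Or.inl h)
      · exact hvS
  have hdisjTU : Disjoint T' U := by
    rw [Set.disjoint_left]
    intro x hx hxU
    exact hxU (Or.inr hx.1)
  have hdegv : degIn G Sᶜ v = degIn G T' v + ∑ C ∈ 𝒜, degIn G (csupp G U C) v := by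
    rw [hScomp, degIn_union _ _ _ _ ?disj2, degIn_union _ _ _ _ hdisjTU, hdegU]
    case disj2 =>
      rw [Set.disjoint_right]
      rintro x rfl
      rintro (h | h)
      · exact hvT' h
      · exact hvU h
    have : degIn G {v} v = 0 := by
      rw [degIn, Set.ncard_eq_zero (Set.toFinite _)]
      ext x
      simp only [Set.mem_inter_iff, mem_neighborSet, Set.mem_singleton_iff,
        Set.mem_empty_iff_false, iff_false]
      rintro ⟨hadj, rfl⟩
      exact G.irrefl hadj
    omega
  -- the component of v in W
  set D₀ : (G.induce W).ConnectedComponent := vComp G hvW with hD₀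
  have hcsD₀ : csupp G W D₀ = insert v (⋃ C ∈ 𝒜s, csupp G U C) :=
    csupp_vComp G hsub hvW hvU hcov
  have hbUnion : (⋃ C ∈ 𝒜s, csupp G U C) = ⋃ C ∈ 𝒜, csupp G U C := by
    ext x
    simp only [Set.mem_iUnion, exists_prop]
    constructor
    · rintro ⟨C, hC, hx⟩; exact ⟨C, (hmem𝒜 C).2 hC, hx⟩
    · rintro ⟨C, hC, hx⟩; exact ⟨C, (hmem𝒜 C).1 hC, hx⟩
  have hD₀e : eBetween G (csupp G W D₀) T'
      = degIn G T' v + ∑ C ∈ 𝒜, eBetween G (csupp G U C) T' := by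
    rw [hcsD₀, hbUnion, Set.insert_eq, eBetween_union_left _ _ _ _ ?disjv,
      eBetween_singleton_left, eBetween_biUnion G 𝒜 _ _ (fun C _ C' _ h => csupp_disjoint G h)]
    case disjv =>
      rw [Set.disjoint_left]
      rintro x rfl hx
      simp only [Set.mem_iUnion, exists_prop] at hx
      obtain ⟨C, -, hx⟩ := hx
      exact hvU (csupp_subset G C hx)
  -- odd components counting
  have hmemoddU : ∀ C : (G.induce U).ConnectedComponent,
      C ∈ oddComps G S T ↔ Odd (eBetween G (csupp G U C) T) := fun C => Iff.rfl
  have hmemoddW : ∀ D : (G.induce W).ConnectedComponent,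
      D ∈ oddComps G S T' ↔ Odd (eBetween G (csupp G W D) T') := fun D => Iff.rfl
  set oddU : Set ((G.induce U).ConnectedComponent) := oddComps G S T with hoddU
  set oddW : Set ((G.induce W).ConnectedComponent) := oddComps G S T' with hoddW
  set a : ℕ := (oddU ∩ 𝒜s).ncard with ha
  set b : ℕ := (oddU \ 𝒜s).ncard with hb
  have hhU : hNum G S T = a + b := by
    rw [hNum, ha, hb, Set.ncard_inter_add_ncard_diff_eq_ncard _ _ (Set.toFinite _)]
  -- parity transfer for non-adjacent components
  have hpar : ∀ C, C ∉ 𝒜s →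
      (Odd (eBetween G (csupp G U C) T') ↔ Odd (eBetween G (csupp G U C) T)) := by
    intro C hC
    rw [eSplit, hdC0 C hC, add_zero]
  have himg : oddW \ {D₀} = cmap G hsub '' (oddU \ 𝒜s) := by
    ext D
    simp only [Set.mem_diff, Set.mem_singleton_iff, Set.mem_image]
    constructor
    · rintro ⟨hD, hne⟩
      obtain ⟨C, hC, rfl⟩ := cmap_surj G hsub hvW hvU hcov hne
      refine ⟨C, ⟨?_, hC⟩, rfl⟩
      rw [hmemoddU, ← hpar C hC]
      rw [hmemoddW] at hD
      rwa [csupp_cmap_of_not_mem G hsub hcov hC] at hD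
    · rintro ⟨C, ⟨hCodd, hC⟩, rfl⟩
      refine ⟨?_, cmap_ne_vComp G hsub hvW hvU hcov hC⟩
      rw [hmemoddW, csupp_cmap_of_not_mem G hsub hcov hC, hpar C hC]
      exact (hmemoddU C).1 hCodd
  have hNumW : hNum G S T'
      = (if Odd (eBetween G (csupp G W D₀) T') then 1 else 0) + b := by
    rw [hNum]
    have h1 : (oddW ∩ {D₀}).ncard + (oddW \ {D₀}).ncard = oddW.ncard :=
      Set.ncard_inter_add_ncard_diff_eq_ncard _ _ (Set.toFinite _)
    have h2 : (oddW \ {D₀}).ncard = b := by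
      rw [himg, Set.ncard_image_of_injOn, hb]
      exact (cmap_injOn G hsub hvU hcov).mono (fun C hC => hC.2)
    have h3 : (oddW ∩ {D₀}).ncard
        = (if Odd (eBetween G (csupp G W D₀) T') then 1 else 0) := by
      by_cases hD : Odd (eBetween G (csupp G W D₀) T')
      · have : oddW ∩ {D₀} = {D₀} := by
          apply subset_antisymm Set.inter_subset_right
          intro x hx
          rw [Set.mem_singleton_iff] at hx
          subst hx
          exact ⟨(hmemoddW D₀).2 hD, rfl⟩
        rw [this, if_pos hD, Set.ncard_singleton]
      · have : oddW ∩ {D₀} = ∅ := by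
          ext x
          simp only [Set.mem_inter_iff, Set.mem_singleton_iff, Set.mem_empty_iff_false,
            iff_false, not_and]
          rintro hx rfl
          exact hD ((hmemoddW D₀).1 hx)
        rw [this, if_neg hD, Set.ncard_empty]
    rw [← hoddW]
    omega
  -- lower bound on the sum of degrees into adjacent components
  have hsumlb : 𝒜.card + 1 ≤ ∑ C ∈ 𝒜, degIn G (csupp G U C) v := by
    rw [← Finset.insert_erase hC₀A, Finset.sum_insert (Finset.notMem_erase _ _),
      Finset.card_insert_of_notMem (Finset.notMem_erase _ _)]
    have h2 : (𝒜.erase C₀).card ≤ ∑ C ∈ 𝒜.erase C₀, degIn G (csupp G U C) v :=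
      card_le_sum' _ _ (fun C hC => hdC1 C (Finset.mem_of_mem_erase hC))
    omega
  have ha_le : a ≤ 𝒜.card := by
    rw [ha, h𝒜, ← Set.ncard_eq_toFinset_card 𝒜s h𝒜fin]
    exact Set.ncard_le_ncard Set.inter_subset_right (Set.toFinite _)
  -- the key inequality
  have key : 2 + a ≤ degIn G T' v + (∑ C ∈ 𝒜, degIn G (csupp G U C) v)
      + (if Odd (eBetween G (csupp G W D₀) T') then 1 else 0) := by
    by_cases hD : Odd (eBetween G (csupp G W D₀) T')
    · rw [if_pos hD]
      omega
    · rw [if_neg hD]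
      by_cases ht1 : 1 ≤ degIn G T' v
      · omega
      · have ht0 : degIn G T' v = 0 := by omega
        by_contra hcon
        push_neg at hcon
        have hsum_eq : ∑ C ∈ 𝒜, degIn G (csupp G U C) v = 𝒜.card + 1 := by omega
        have ha_eq : a = 𝒜.card := by omega
        -- all adjacent components are odd
        have hodd_all : oddU ∩ 𝒜s = 𝒜s := by
          apply Set.eq_of_subset_of_ncard_le Set.inter_subset_right _ (Set.toFinite _)
          rw [← ha, ha_eq, h𝒜, ← Set.ncard_eq_toFinset_card 𝒜s h𝒜fin]
        have hodd_mem : ∀ C ∈ 𝒜, Odd (eBetween G (csupp G U C) T) := by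
          intro C hC
          have : C ∈ oddU ∩ 𝒜s := by rw [hodd_all]; exact (hmem𝒜 C).1 hC
          exact (hmemoddU C).1 this.1
        -- dC C₀ = 2 and others = 1
        have hd2 : degIn G (csupp G U C₀) v = 2 := by
          have h2 : (𝒜.erase C₀).card ≤ ∑ C ∈ 𝒜.erase C₀, degIn G (csupp G U C) v :=
            card_le_sum' _ _ (fun C hC => hdC1 C (Finset.mem_of_mem_erase hC))
          have h3 : ∑ C ∈ 𝒜.erase C₀, degIn G (csupp G U C) v + degIn G (csupp G U C₀) v
              = ∑ C ∈ 𝒜, degIn G (csupp G U C) v := Finset.sum_erase_add 𝒜 _ hC₀A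
          have h4 : (𝒜.erase C₀).card + 1 = 𝒜.card := Finset.card_erase_add_one hC₀A
          omega
        have hrest : ∀ C ∈ 𝒜.erase C₀, degIn G (csupp G U C) v = 1 := by
          apply all_one_of_sum_le _ _ (fun C hC => hdC1 C (Finset.mem_of_mem_erase hC))
          have h3 : ∑ C ∈ 𝒜.erase C₀, degIn G (csupp G U C) v + degIn G (csupp G U C₀) v
              = ∑ C ∈ 𝒜, degIn G (csupp G U C) v := Finset.sum_erase_add 𝒜 _ hC₀A
          have h4 : (𝒜.erase C₀).card + 1 = 𝒜.card := Finset.card_erase_add_one hC₀A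
          omega
        -- parity: e(D₀, T') is odd, contradiction
        apply hD
        rw [hD₀e, ht0, zero_add, ← Finset.insert_erase hC₀A,
          Finset.sum_insert (Finset.notMem_erase _ _)]
        apply Odd.add_even
        · have hsplit := eSplit (csupp G U C₀)
          have hodd := hodd_mem C₀ hC₀A
          rw [Nat.odd_iff] at hodd ⊢
          omega
        · apply Finset.even_sum
          intro C hC
          have hsplit := eSplit (csupp G U C)
          have hodd := hodd_mem C (Finset.mem_of_mem_erase hC)
          have h1 := hrest C hC
          rw [Nat.odd_iff] at hodd
          rw [Nat.even_iff]
          omega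
  have key2 : 2 + hNum G S T ≤ degIn G Sᶜ v + hNum G S T' := by
    rw [hhU, hNumW, hdegv]
    omega
  -- finsum manipulation
  have hTfin : T.Finite := Set.toFinite T
  have hT'fin : T'.Finite := Set.toFinite T'
  have hTF : hTfin.toFinset = insert v hT'fin.toFinset := by
    ext x
    simp only [Set.Finite.mem_toFinset, Finset.mem_insert, hT', Set.mem_diff,
      Set.mem_singleton_iff]
    constructor
    · intro hx
      by_cases hxv : x = v
      · exact Or.inl hxv
      · exact Or.inr ⟨hx, hxv⟩
    · rintro (rfl | ⟨hx, -⟩)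
      · exact hvT
      · exact hx
  have hvnotin : v ∉ hT'fin.toFinset := by
    rw [Set.Finite.mem_toFinset]
    exact hvT'
  have hsumT : (∑ᶠ x ∈ T, (degIn G Sᶜ x : ℤ))
      = (degIn G Sᶜ v : ℤ) + ∑ᶠ x ∈ T', (degIn G Sᶜ x : ℤ) := by
    rw [← hTfin.coe_toFinset, finsum_mem_coe_finset, ← hT'fin.coe_toFinset,
      finsum_mem_coe_finset, hTF, Finset.sum_insert hvnotin]
  have hcardT : T.ncard = T'.ncard + 1 := by
    have hins : T = insert v T' := by rw [hTdecomp, Set.union_singleton]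
    rw [hins, Set.ncard_insert_of_notMem hvT' (Set.toFinite _)]
  have hδ' : deltaST G S T' ≤ -2 := by
    have hδ := hmin.1.2
    rw [deltaST] at hδ ⊢
    have k2 : ((2 : ℤ) + (hNum G S T : ℤ))
        ≤ (degIn G Sᶜ v : ℤ) + (hNum G S T' : ℤ) := by exact_mod_cast key2
    rw [hsumT, hcardT] at hδ
    push_cast at hδ ⊢
    linarith
  have hbar' : IsBarrier G S T' := ⟨hmin.1.1.mono_right Set.diff_subset, hδ'⟩
  have hle2 := hmin.2 S T' hbar'
  have hssub : S ∪ T' ⊂ S ∪ T := by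
    refine ⟨Set.union_subset_union_right S Set.diff_subset, fun h => ?_⟩
    rcases h (Or.inr hvT) with h' | h'
    · exact hvS h'
    · exact hvT' h'
  have hlt := Set.ncard_lt_ncard hssub (Set.toFinite _)
  omega

end VizingTwoFactor
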